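/- Let (X, 𝒜, μ) be a σ-finite measure space and let p and q be probability measures on X with densities f and g with respect to μ. Then ∫_{ {f+g>0} } [ f·log(f/(f+g)) + g·log(g/(f+g)) ] dμ = −2·log 2 + KL(p ‖ m) + KL(q ‖ m), where m = (1/2)(p + q) and KL denotes the Kullback–Leibler divergence. -/

import Mathlib

open MeasureTheory Real
open scoped ENNReal NNReal

lemma aux_integrable {X : Type*} [MeasurableSpace X] (μ : Measure X)
    (f g : X → ℝ) (hf : Measurable f) (hg : Measurable g)
    (hf0 : ∀ x, 0 ≤ f x) (hg0 : ∀ x, 0 ≤ g x)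
    (hfi : Integrable f μ) (hgi : Integrable g μ) :
    Integrable (fun x => f x * log (f x / (f x + g x))) μ := by
  have hmeas : AEStronglyMeasurable (fun x => f x * log (f x / (f x + g x))) μ := by
    apply AEStronglyMeasurable.mul hf.aestronglyMeasurable
    exact (Real.measurable_log.comp (hf.div (hf.add hg))).aestronglyMeasurable
  refine Integrable.mono' (hfi.add hgi) hmeas (ae_of_all _ fun x => ?_)
  simp only [norm_eq_abs]
  rcases eq_or_lt_of_le (hf0 x) with h0 | h0
  · simp [← h0, hg0 x]
  · have hfg : 0 < f x + g x := lt_of_lt_of_le h0 (le_add_of_nonneg_right (hg0 x))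
    have ht0 : 0 < f x / (f x + g x) := div_pos h0 hfg
    have ht1 : f x / (f x + g x) ≤ 1 := (div_le_one hfg).mpr (le_add_of_nonneg_right (hg0 x))
    have hlog : log (f x / (f x + g x)) ≤ 0 := Real.log_nonpos ht0.le ht1
    have habs : |f x * log (f x / (f x + g x))| = f x * (-log (f x / (f x + g x))) := by
      rw [abs_of_nonpos (mul_nonpos_iff.mpr (Or.inl ⟨(hf0 x), hlog⟩))]; ring
    rw [habs, ← Real.log_inv]
    have hinv : (f x / (f x + g x))⁻¹ = (f x + g x) / f x := by
      rw [inv_div]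
    rw [hinv]
    have := Real.log_le_sub_one_of_pos (div_pos hfg h0)
    calc f x * log ((f x + g x) / f x) ≤ f x * ((f x + g x) / f x - 1) := by
          exact mul_le_mul_of_nonneg_left this (hf0 x)
      _ = g x := by field_simp; ring
      _ ≤ f x + g x := le_add_of_nonneg_left (hf0 x)

/-- The Kullback–Leibler divergence `KL(p ‖ q) = ∫ log (dp/dq) dp`. -/
noncomputable def klDiv {X : Type*} [MeasurableSpace X] (p q : Measure X) : ℝ :=
  ∫ x, log ((p.rnDeriv q x).toReal) ∂p

lemma aux_key {X : Type*} [MeasurableSpace X] (μ : Measure X) [SigmaFinite μ]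
    (f g : X → ℝ) (hf : Measurable f) (hg : Measurable g)
    (hf0 : ∀ x, 0 ≤ f x) (hg0 : ∀ x, 0 ≤ g x)
    (hfi : Integrable f μ) (hgi : Integrable g μ)
    (haux : Integrable (fun x => f x * log (f x / (f x + g x))) μ)
    (hfint : ∫ x, f x ∂μ = 1) :
    klDiv (μ.withDensity (fun x => ENNReal.ofReal (f x)))
      ((2 : ℝ≥0∞)⁻¹ • (μ.withDensity (fun x => ENNReal.ofReal (f x)) +
        μ.withDensity (fun x => ENNReal.ofReal (g x)))) =
      log 2 + ∫ x, f x * log (f x / (f x + g x)) ∂μ := by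
  set p := μ.withDensity (fun x => ENNReal.ofReal (f x)) with hp
  set m := (2 : ℝ≥0∞)⁻¹ • (p + μ.withDensity (fun x => ENNReal.ofReal (g x))) with hm
  have hfm : Measurable (fun x => ENNReal.ofReal (f x)) := ENNReal.measurable_ofReal.comp hf
  have hgm : Measurable (fun x => ENNReal.ofReal (g x)) := ENNReal.measurable_ofReal.comp hg
  have hfg0 : ∀ x, 0 ≤ f x + g x := fun x => add_nonneg (hf0 x) (hg0 x)
  -- m as a withDensity
  have hdm : Measurable (fun x => ENNReal.ofReal ((f x + g x) / 2)) :=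
    ENNReal.measurable_ofReal.comp ((hf.add hg).div_const 2)
  have hmwd : m = μ.withDensity (fun x => ENNReal.ofReal ((f x + g x) / 2)) := by
    rw [hm, hp, ← withDensity_add_left hfm, ← withDensity_smul' _ _ (by norm_num)]
    congr 1
    funext x
    rw [Pi.smul_apply, Pi.add_apply, ← ENNReal.ofReal_add (hf0 x) (hg0 x), smul_eq_mul,
      ENNReal.ofReal_div_of_pos (by norm_num : (0:ℝ) < 2), ENNReal.ofReal_ofNat,
      ENNReal.div_eq_inv_mul]
  -- density of p wrt m
  set h : X → ℝ≥0∞ := fun x => ENNReal.ofReal (2 * f x / (f x + g x)) with hh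
  have hhm : Measurable h := ENNReal.measurable_ofReal.comp ((measurable_const.mul hf).div (hf.add hg))
  have hpm : p = m.withDensity h := by
    rw [hmwd, ← withDensity_mul μ hdm hhm, hp]
    congr 1
    funext x
    rw [Pi.mul_apply]
    rcases eq_or_lt_of_le (hfg0 x) with h0 | h0
    · have hfx : f x = 0 := le_antisymm (by nlinarith [hg0 x]) (hf0 x)
      have hgx : g x = 0 := by nlinarith [hg0 x]
      simp [hfx, hgx, hh]
    · rw [← ENNReal.ofReal_mul (by positivity)]
      congr 1
      field_simp
  have hfin : IsFiniteMeasure m := by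
    rw [hmwd]
    exact isFiniteMeasure_withDensity_ofReal ((hfi.add hgi).div_const 2).2
  have hrn : p.rnDeriv m =ᵐ[m] h := by
    rw [hpm]; exact Measure.rnDeriv_withDensity m hhm
  have hac : p ≪ m := hpm ▸ withDensity_absolutelyContinuous m h
  have hrnp : p.rnDeriv m =ᵐ[p] h := hac.ae_eq hrn
  have step1 : klDiv p m = ∫ x, log ((h x).toReal) ∂p := by
    refine integral_congr_ae (hrnp.mono fun x hx => by dsimp only; rw [hx])
  have htoReal : ∀ x, (h x).toReal = 2 * f x / (f x + g x) := fun x =>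
    ENNReal.toReal_ofReal (div_nonneg (mul_nonneg (by norm_num) (hf0 x)) (hfg0 x))
  -- integral over p as weighted integral over μ
  set fnn : X → ℝ≥0 := fun x => (f x).toNNReal with hfnn
  have hfnnm : Measurable fnn := hf.real_toNNReal
  have step2 : ∫ x, log ((h x).toReal) ∂p = ∫ x, f x * log (2 * f x / (f x + g x)) ∂μ := by
    have : p = μ.withDensity (fun x => (fnn x : ℝ≥0∞)) := rfl
    rw [this, integral_withDensity_eq_integral_smul hfnnm]
    refine integral_congr_ae (ae_of_all _ fun x => ?_)
    dsimp only; rw [htoReal x, NNReal.smul_def, smul_eq_mul, Real.coe_toNNReal _ (hf0 x)]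
  have step3 : ∀ x, f x * log (2 * f x / (f x + g x)) =
      f x * log 2 + f x * log (f x / (f x + g x)) := by
    intro x
    rcases eq_or_lt_of_le (hf0 x) with h0 | h0
    · simp [← h0]
    · have hfg : 0 < f x + g x := lt_of_lt_of_le h0 (le_add_of_nonneg_right (hg0 x))
      rw [mul_div_assoc, Real.log_mul two_ne_zero (ne_of_gt (div_pos h0 hfg))]
      ring
  have step4 : ∫ x, f x * log (2 * f x / (f x + g x)) ∂μ =
      log 2 + ∫ x, f x * log (f x / (f x + g x)) ∂μ := by
    rw [integral_congr_ae (ae_of_all _ fun x => step3 x),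
      integral_add (hfi.mul_const (log 2)) haux, integral_mul_const, hfint, one_mul]
  rw [step1, step2, step4]

/-- Substituting the optimal discriminator into the adversarial objective:
if `p, q` are probability measures with densities `f, g` with respect to a σ-finite
measure `μ`, and `m = (1/2)(p + q)`, then
`∫_{f+g>0} [f·log (f/(f+g)) + g·log (g/(f+g))] dμ = -2·log 2 + KL(p ‖ m) + KL(q ‖ m)`. -/
theorem optimal_discriminator_objective_value {X : Type*} [MeasurableSpace X]
    (μ : Measure X) [SigmaFinite μ] (f g : X → ℝ)
    (hf : Measurable f) (hg : Measurable g)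
    (hf0 : ∀ x, 0 ≤ f x) (hg0 : ∀ x, 0 ≤ g x)
    (hfi : Integrable f μ) (hgi : Integrable g μ)
    (p q m : Measure X)
    (hp : p = μ.withDensity (fun x => ENNReal.ofReal (f x)))
    (hq : q = μ.withDensity (fun x => ENNReal.ofReal (g x)))
    (hpP : IsProbabilityMeasure p) (hqP : IsProbabilityMeasure q)
    (hm : m = (2 : ℝ≥0∞)⁻¹ • (p + q)) :
    ∫ x in {x | 0 < f x + g x},
        (f x * log (f x / (f x + g x)) + g x * log (g x / (f x + g x))) ∂μ =
      -2 * log 2 + klDiv p m + klDiv q m := by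
  -- integrals of the densities are 1
  have hint : ∀ (f : X → ℝ), Measurable f → (∀ x, 0 ≤ f x) → Integrable f μ →
      IsProbabilityMeasure (μ.withDensity (fun x => ENNReal.ofReal (f x))) →
      ∫ x, f x ∂μ = 1 := by
    intro f hf hf0 hfi hP
    have h1 : (μ.withDensity (fun x => ENNReal.ofReal (f x))) Set.univ = 1 := hP.measure_univ
    rw [withDensity_apply _ MeasurableSet.univ, Measure.restrict_univ,
      ← ofReal_integral_eq_lintegral_ofReal hfi (ae_of_all _ hf0)] at h1
    exact ENNReal.ofReal_eq_one.mp h1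
  have hfint : ∫ x, f x ∂μ = 1 := hint f hf hf0 hfi (hp ▸ hpP)
  have hgint : ∫ x, g x ∂μ = 1 := hint g hg hg0 hgi (hq ▸ hqP)
  have hauxf := aux_integrable μ f g hf hg hf0 hg0 hfi hgi
  have hauxg := aux_integrable μ g f hg hf hg0 hf0 hgi hfi
  have hKLp : klDiv p m = log 2 + ∫ x, f x * log (f x / (f x + g x)) ∂μ := by
    rw [hm, hp, hq]
    exact aux_key μ f g hf hg hf0 hg0 hfi hgi hauxf hfint
  have hKLq : klDiv q m = log 2 + ∫ x, g x * log (g x / (g x + f x)) ∂μ := by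
    rw [hm, hp, hq]
    rw [add_comm (μ.withDensity fun x => ENNReal.ofReal (f x))]
    exact aux_key μ g f hg hf hg0 hf0 hgi hfi hauxg hgint
  have hcomm : ∀ x, g x / (g x + f x) = g x / (f x + g x) := fun x => by rw [add_comm]
  have hKLq' : klDiv q m = log 2 + ∫ x, g x * log (g x / (f x + g x)) ∂μ := by
    rw [hKLq]; congr 1; exact integral_congr_ae (ae_of_all _ fun x => by dsimp only; rw [hcomm x])
  -- the set integral equals the full integral
  have hset : ∫ x in {x | 0 < f x + g x},
      (f x * log (f x / (f x + g x)) + g x * log (g x / (f x + g x))) ∂μ =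
      ∫ x, (f x * log (f x / (f x + g x)) + g x * log (g x / (f x + g x))) ∂μ := by
    apply setIntegral_eq_integral_of_forall_compl_eq_zero
    intro x hx
    have h0 : f x + g x ≤ 0 := le_of_not_gt hx
    have hfx : f x = 0 := le_antisymm (by nlinarith [hg0 x]) (hf0 x)
    have hgx : g x = 0 := le_antisymm (by linarith) (hg0 x)
    simp [hfx, hgx]
  have hauxg' : Integrable (fun x => g x * log (g x / (f x + g x))) μ := by
    refine hauxg.congr (ae_of_all _ fun x => ?_)
    dsimp only; rw [hcomm x]
  rw [hset, integral_add hauxf hauxg', hKLp, hKLq']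
  ring
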